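/- Assume max{δ, ν} ≤ 1/4. Let M ∈ Ŵ ∩ S satisfy λ_1(M) > max{2δ, λ_2(M)}. Then min over j ∈ {1,…,m} and s ∈ {−1, 1} of ‖s·w_j − u_1(M)‖ is at most √8 · (c_r^{−1/2}·√ν + ν + 2δ) / (λ_1(M) − λ_2(M)). -/

import Mathlib

open Matrix

noncomputable def vnorm {d : ℕ} (v : Fin d → ℝ) : ℝ := Real.sqrt (∑ i, v i ^ 2)

noncomputable def frobInner {d : ℕ} (M N : Matrix (Fin d) (Fin d) ℝ) : ℝ :=
  ∑ i, ∑ j, M i j * N i j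

noncomputable def frobNorm {d : ℕ} (M : Matrix (Fin d) (Fin d) ℝ) : ℝ :=
  Real.sqrt (frobInner M M)

def IsOrthProjOn {d : ℕ} (V : Submodule ℝ (Matrix (Fin d) (Fin d) ℝ))
    (P : Matrix (Fin d) (Fin d) ℝ →ₗ[ℝ] Matrix (Fin d) (Fin d) ℝ) : Prop :=
  (∀ X, P X ∈ V) ∧ (∀ X ∈ V, P X = X) ∧ ∀ X Y, frobInner (P X) Y = frobInner X (P Y)

noncomputable def hsNorm {d : ℕ}
    (T : Matrix (Fin d) (Fin d) ℝ →ₗ[ℝ] Matrix (Fin d) (Fin d) ℝ) : ℝ :=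
  Real.sqrt (∑ i, ∑ j,
    frobInner (T (Matrix.single i j 1)) (T (Matrix.single i j 1)))

noncomputable def specNorm {d : ℕ} (M : Matrix (Fin d) (Fin d) ℝ) : ℝ :=
  sSup {r : ℝ | ∃ v : Fin d → ℝ, (∑ i, v i ^ 2) = 1 ∧ r = |dotProduct v (M.mulVec v)|}

noncomputable def lamTop {d : ℕ} (M : Matrix (Fin d) (Fin d) ℝ) : ℝ :=
  sSup {r : ℝ | ∃ v : Fin d → ℝ, (∑ i, v i ^ 2) = 1 ∧ r = dotProduct v (M.mulVec v)}

def IsLocMaxSpec {d : ℕ} (V : Submodule ℝ (Matrix (Fin d) (Fin d) ℝ))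
    (M : Matrix (Fin d) (Fin d) ℝ) : Prop :=
  M ∈ V ∧ frobNorm M ≤ 1 ∧
    ∃ ε > 0, ∀ X ∈ V, frobNorm X ≤ 1 → frobNorm (X - M) < ε → specNorm X ≤ specNorm M

section Aux
open Finset
variable {ι : Type*} [Fintype ι]

lemma aux_cs (f g : ι → ℝ) : (∑ i, f i * g i) ^ 2 ≤ (∑ i, f i ^ 2) * ∑ i, g i ^ 2 :=
  Finset.sum_mul_sq_le_sq_mul_sq univ f g

lemma aux_sqrt_le_of_sq_le {x y : ℝ} (hy : 0 ≤ y) (h : x ≤ y ^ 2) : Real.sqrt x ≤ y := by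
  calc Real.sqrt x ≤ Real.sqrt (y ^ 2) := Real.sqrt_le_sqrt h
  _ = y := Real.sqrt_sq hy

lemma aux_cs_abs (f g : ι → ℝ) :
    |∑ i, f i * g i| ≤ Real.sqrt (∑ i, f i ^ 2) * Real.sqrt (∑ i, g i ^ 2) := by
  have h1 : (0:ℝ) ≤ ∑ i, f i ^ 2 := by positivity
  rw [← Real.sqrt_sq_eq_abs, ← Real.sqrt_mul h1]
  exact Real.sqrt_le_sqrt (aux_cs f g)

lemma aux_cs' (f g : ι → ℝ) :
    ∑ i, f i * g i ≤ Real.sqrt (∑ i, f i ^ 2) * Real.sqrt (∑ i, g i ^ 2) :=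
  (le_abs_self _).trans (aux_cs_abs f g)

lemma aux_sum_sq_add (f g : ι → ℝ) :
    ∑ i, (f i + g i) ^ 2 = (∑ i, f i ^ 2) + 2 * (∑ i, f i * g i) + ∑ i, g i ^ 2 := by
  rw [Finset.mul_sum, ← Finset.sum_add_distrib, ← Finset.sum_add_distrib]
  exact Finset.sum_congr rfl fun i _ => by ring

lemma aux_tri (f g : ι → ℝ) :
    Real.sqrt (∑ i, (f i + g i) ^ 2) ≤ Real.sqrt (∑ i, f i ^ 2) + Real.sqrt (∑ i, g i ^ 2) := by
  have h1 : (0:ℝ) ≤ ∑ i, f i ^ 2 := by positivity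
  have h2 : (0:ℝ) ≤ ∑ i, g i ^ 2 := by positivity
  apply aux_sqrt_le_of_sq_le (by positivity)
  rw [aux_sum_sq_add]
  have := aux_cs' f g
  nlinarith [Real.sq_sqrt h1, Real.sq_sqrt h2]

lemma aux_tri_sum {κ : Type*} [DecidableEq κ] (s : Finset κ) (F : κ → ι → ℝ) :
    Real.sqrt (∑ i, (∑ k ∈ s, F k i) ^ 2) ≤ ∑ k ∈ s, Real.sqrt (∑ i, F k i ^ 2) := by
  induction s using Finset.induction with
  | empty => simp
  | insert a s' hk ih =>
    simp only [Finset.sum_insert hk]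
    calc Real.sqrt (∑ i, (F a i + ∑ k ∈ s', F k i) ^ 2)
        ≤ Real.sqrt (∑ i, F a i ^ 2) + Real.sqrt (∑ i, (∑ k ∈ s', F k i) ^ 2) :=
          aux_tri (fun i => F a i) (fun i => ∑ k ∈ s', F k i)
      _ ≤ _ := by gcongr

end Aux

section MatAux
open Finset
variable {d : ℕ}

lemma frobInner_eq_sum_prod (M N : Matrix (Fin d) (Fin d) ℝ) :
    frobInner M N = ∑ p : Fin d × Fin d, M p.1 p.2 * N p.1 p.2 := by
  rw [frobInner, ← Finset.univ_product_univ, Finset.sum_product]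

lemma frobNormSq_eq (M : Matrix (Fin d) (Fin d) ℝ) :
    frobInner M M = ∑ p : Fin d × Fin d, (M p.1 p.2) ^ 2 := by
  rw [frobInner_eq_sum_prod]; exact Finset.sum_congr rfl fun p _ => (sq _).symm

lemma frobInner_self_nonneg (M : Matrix (Fin d) (Fin d) ℝ) : 0 ≤ frobInner M M := by
  rw [frobNormSq_eq]; positivity

lemma frobNorm_nonneg (M : Matrix (Fin d) (Fin d) ℝ) : 0 ≤ frobNorm M := Real.sqrt_nonneg _

lemma frobNorm_sq (M : Matrix (Fin d) (Fin d) ℝ) : frobNorm M ^ 2 = frobInner M M :=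
  Real.sq_sqrt (frobInner_self_nonneg M)

lemma quadform_abs_le (E : Matrix (Fin d) (Fin d) ℝ) (v : Fin d → ℝ) (hv : ∑ i, v i ^ 2 = 1) :
    |dotProduct v (E.mulVec v)| ≤ frobNorm E := by
  have h1 : dotProduct v (E.mulVec v) = ∑ p : Fin d × Fin d, E p.1 p.2 * (v p.1 * v p.2) := by
    rw [← Finset.univ_product_univ, Finset.sum_product]
    simp only [dotProduct, mulVec, Finset.mul_sum]
    exact Finset.sum_congr rfl fun i _ => Finset.sum_congr rfl fun j _ => by ring
  have h2 : ∑ p : Fin d × Fin d, (v p.1 * v p.2) ^ 2 = 1 := by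
    rw [← Finset.univ_product_univ, Finset.sum_product]
    simp only [mul_pow]
    rw [← Finset.sum_mul_sum]
    rw [hv]; ring
  calc |dotProduct v (E.mulVec v)|
      ≤ Real.sqrt (∑ p : Fin d × Fin d, (E p.1 p.2) ^ 2) *
        Real.sqrt (∑ p : Fin d × Fin d, (v p.1 * v p.2) ^ 2) := by rw [h1]; exact aux_cs_abs _ _
    _ = frobNorm E := by rw [h2, Real.sqrt_one, mul_one, frobNorm, frobNormSq_eq]

lemma mulVec_vnorm_le (E : Matrix (Fin d) (Fin d) ℝ) (x : Fin d → ℝ) :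
    vnorm (E.mulVec x) ≤ frobNorm E * vnorm x := by
  rw [vnorm, frobNorm, frobNormSq_eq, vnorm,
    ← Real.sqrt_mul (by positivity)]
  apply Real.sqrt_le_sqrt
  rw [← Finset.univ_product_univ, Finset.sum_product, Finset.sum_mul]
  apply Finset.sum_le_sum
  intro i _
  calc (E.mulVec x i) ^ 2 = (∑ j, E i j * x j) ^ 2 := by rw [mulVec, dotProduct]
    _ ≤ (∑ j, E i j ^ 2) * ∑ j, x j ^ 2 := aux_cs _ _

lemma frobNorm_linmap_le (T : Matrix (Fin d) (Fin d) ℝ →ₗ[ℝ] Matrix (Fin d) (Fin d) ℝ)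
    (X : Matrix (Fin d) (Fin d) ℝ) : frobNorm (T X) ≤ hsNorm T * frobNorm X := by
  have hX : X = ∑ p : Fin d × Fin d, X p.1 p.2 • Matrix.single p.1 p.2 (1:ℝ) := by
    conv_lhs => rw [Matrix.matrix_eq_sum_single X]
    rw [← Finset.univ_product_univ, Finset.sum_product]
    exact Finset.sum_congr rfl fun i _ => Finset.sum_congr rfl fun j _ => by
      rw [Matrix.smul_single, smul_eq_mul, mul_one]
  have hTX : T X = ∑ p : Fin d × Fin d, X p.1 p.2 • T (Matrix.single p.1 p.2 (1:ℝ)) := by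
    conv_lhs => rw [hX]
    rw [map_sum]
    exact Finset.sum_congr rfl fun p _ => by rw [_root_.map_smul]
  have hfn : ∀ (N : Matrix (Fin d) (Fin d) ℝ),
      frobNorm N = Real.sqrt (∑ p : Fin d × Fin d, (N p.1 p.2)^2) :=
    fun N => by rw [frobNorm, frobNormSq_eq]
  calc frobNorm (T X)
      = Real.sqrt (∑ q : Fin d × Fin d,
          (∑ p : Fin d × Fin d, (X p.1 p.2 • T (Matrix.single p.1 p.2 (1:ℝ))) q.1 q.2) ^ 2) := by
        rw [hfn, hTX]
        congr 1
        refine Finset.sum_congr rfl fun q _ => ?_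
        congr 1
        rw [Matrix.sum_apply]
    _ ≤ ∑ p : Fin d × Fin d, Real.sqrt (∑ q : Fin d × Fin d,
          ((X p.1 p.2 • T (Matrix.single p.1 p.2 (1:ℝ))) q.1 q.2) ^ 2) :=
        aux_tri_sum _ _
    _ = ∑ p : Fin d × Fin d, |X p.1 p.2| * frobNorm (T (Matrix.single p.1 p.2 (1:ℝ))) := by
        refine Finset.sum_congr rfl fun p _ => ?_
        rw [hfn]
        have : ∀ q : Fin d × Fin d, ((X p.1 p.2 • T (Matrix.single p.1 p.2 (1:ℝ))) q.1 q.2)^2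
            = X p.1 p.2 ^2 * (T (Matrix.single p.1 p.2 (1:ℝ)) q.1 q.2)^2 := by
          intro q; rw [Matrix.smul_apply, smul_eq_mul]; ring
        simp_rw [this]
        rw [← Finset.mul_sum, Real.sqrt_mul (by positivity), Real.sqrt_sq_eq_abs]
    _ ≤ Real.sqrt (∑ p : Fin d × Fin d, |X p.1 p.2| ^ 2) *
        Real.sqrt (∑ p : Fin d × Fin d, frobNorm (T (Matrix.single p.1 p.2 (1:ℝ))) ^ 2) :=
        aux_cs' _ _
    _ = hsNorm T * frobNorm X := by
        have e1 : Real.sqrt (∑ p : Fin d × Fin d, |X p.1 p.2| ^ 2) = frobNorm X := by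
          rw [hfn]; congr 1; exact Finset.sum_congr rfl fun p _ => sq_abs _
        have e2 : Real.sqrt (∑ p : Fin d × Fin d,
            frobNorm (T (Matrix.single p.1 p.2 (1:ℝ))) ^ 2) = hsNorm T := by
          unfold hsNorm
          congr 1
          rw [← Finset.univ_product_univ, Finset.sum_product]
          exact Finset.sum_congr rfl fun i _ => Finset.sum_congr rfl fun j _ =>
            frobNorm_sq _
        rw [e1, e2, mul_comm]

lemma frobInner_add_add (A E : Matrix (Fin d) (Fin d) ℝ) :
    frobInner (A + E) (A + E) = frobInner A A + 2 * frobInner A E + frobInner E E := by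
  simp only [frobInner_eq_sum_prod, Matrix.add_apply]
  rw [Finset.mul_sum, ← Finset.sum_add_distrib, ← Finset.sum_add_distrib]
  exact Finset.sum_congr rfl fun p _ => by ring

lemma frobInner_neg_neg (X : Matrix (Fin d) (Fin d) ℝ) : frobInner (-X) (-X) = frobInner X X := by
  simp only [frobInner_eq_sum_prod, Matrix.neg_apply]
  exact Finset.sum_congr rfl fun p _ => by ring

lemma vecMulVec_mulVec' (a b x : Fin d → ℝ) :
    (vecMulVec a b).mulVec x = (dotProduct b x) • a := by
  funext i
  simp only [mulVec, dotProduct, vecMulVec_apply, Pi.smul_apply, smul_eq_mul]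
  rw [Finset.sum_mul]
  exact Finset.sum_congr rfl fun k _ => by ring

lemma sum_mulVec' {κ : Type*} [Fintype κ] (N : κ → Matrix (Fin d) (Fin d) ℝ) (x : Fin d → ℝ) :
    (∑ j, N j).mulVec x = ∑ j, (N j).mulVec x := by
  funext k
  rw [Finset.sum_apply]
  simp only [mulVec, dotProduct, Finset.sum_apply]
  rw [Finset.sum_comm]
  refine Finset.sum_congr rfl fun l _ => ?_
  rw [Matrix.sum_apply, Finset.sum_mul]

lemma dotProduct_sum' {κ : Type*} [Fintype κ] (x : Fin d → ℝ) (v : κ → Fin d → ℝ) :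
    dotProduct x (∑ j, v j) = ∑ j, dotProduct x (v j) := by
  simp only [dotProduct, Finset.sum_apply, Finset.mul_sum]
  exact Finset.sum_comm

end MatAux

lemma endgame_arith {G B a : ℝ} (hG : 0 < G) (hB : 0 ≤ B) (habs : |a| ≤ 1)
    (hmain : G ≤ 2*B ∨ (3/4*G)^2 * (1 - a^2) ≤ (3/2*B)^2) :
    (2 - 2*|a|) * G^2 ≤ 8*B^2 := by
  have hsq : a^2 ≤ |a| := by nlinarith [abs_nonneg a, sq_abs a]
  have h0 : 0 ≤ |a| := abs_nonneg a
  rcases hmain with h | h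
  · nlinarith
  · nlinarith [sq_nonneg G]

set_option maxHeartbeats 2000000 in
theorem largest_eigenvector_recovery
    (d m : ℕ) (hd : 2 ≤ d) (hm : 0 < m)
    (w : Fin m → Fin d → ℝ) (hw : ∀ j, vnorm (w j) = 1)
    (Wh : Submodule ℝ (Matrix (Fin d) (Fin d) ℝ))
    (hWhsym : ∀ X ∈ Wh, X.IsSymm)
    (PW PWh : Matrix (Fin d) (Fin d) ℝ →ₗ[ℝ] Matrix (Fin d) (Fin d) ℝ)
    (hPW : IsOrthProjOn (Submodule.span ℝ (Set.range fun j => vecMulVec (w j) (w j))) PW)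
    (hPWh : IsOrthProjOn Wh PWh)
    (δ : ℝ) (hδ : δ = hsNorm (PW - PWh))
    (CF ν : ℝ)
    (hframe : ∀ x : Fin d → ℝ, ∑ j, (dotProduct x (w j)) ^ 2 ≤ CF * ∑ i, x i ^ 2)
    (hν : ν = CF - 1)
    (cr : ℝ) (hcr : 0 < cr)
    (hriesz : ∀ σ : Fin m → ℝ,
      cr * ∑ j, σ j ^ 2 ≤ frobNorm (∑ j, σ j • vecMulVec (w j) (w j)) ^ 2)
    (M : Matrix (Fin d) (Fin d) ℝ) (hM : M ∈ Wh) (hMS : frobNorm M = 1)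
    (lam : Fin d → ℝ) (u : Fin d → Fin d → ℝ)
    (hmono : ∀ i j : Fin d, i ≤ j → lam j ≤ lam i)
    (horth : ∀ i j : Fin d, dotProduct (u i) (u j) = if i = j then 1 else 0)
    (heig : ∀ i, M.mulVec (u i) = lam i • u i)
    (hδν : max δ ν ≤ 1 / 4)
    (hgap : lam ⟨0, by omega⟩ > max (2 * δ) (lam ⟨1, by omega⟩)) :
    ∃ (j : Fin m) (s : ℝ), (s = 1 ∨ s = -1) ∧
      vnorm (s • w j - u ⟨0, by omega⟩) ≤
        Real.sqrt 8 * ((Real.sqrt cr)⁻¹ * Real.sqrt ν + ν + 2 * δ) /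
          (lam ⟨0, by omega⟩ - lam ⟨1, by omega⟩) := by
  classical
  set j0 : Fin d := ⟨0, by omega⟩ with hj0
  set j1 : Fin d := ⟨1, by omega⟩ with hj1
  -- basic normalizations
  have hu_unit : ∀ i, ∑ k, u i k ^ 2 = 1 := by
    intro i
    have h := horth i i
    rw [if_pos rfl] at h
    rw [← h]
    exact Finset.sum_congr rfl fun k _ => sq (u i k)
  have hw_unit : ∀ j, ∑ k, w j k ^ 2 = 1 := by
    intro j
    have h := congrArg (· ^ 2) (hw j)
    simp only [vnorm] at h
    rwa [Real.sq_sqrt (by positivity), one_pow] at h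
  have hww : ∀ j, dotProduct (w j) (w j) = 1 := by
    intro j
    rw [dotProduct, ← hw_unit j]
    exact Finset.sum_congr rfl fun k _ => (sq (w j k)).symm
  have hδ0 : 0 ≤ δ := by rw [hδ]; exact Real.sqrt_nonneg _
  have hδ4 : δ ≤ 1/4 := le_trans (le_max_left _ _) hδν
  have hν4 : ν ≤ 1/4 := le_trans (le_max_right _ _) hδν
  have hCF1 : 1 ≤ CF := by
    have h1 := hframe (w ⟨0, hm⟩)
    have h2 : (dotProduct (w ⟨0, hm⟩) (w ⟨0, hm⟩))^2 ≤ ∑ j, (dotProduct (w ⟨0, hm⟩) (w j))^2 :=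
      Finset.single_le_sum (f := fun j => (dotProduct (w ⟨0, hm⟩) (w j))^2)
        (fun j _ => sq_nonneg _) (Finset.mem_univ (⟨0, hm⟩ : Fin m))
    rw [hww, one_pow] at h2
    rw [hw_unit, mul_one] at h1
    linarith
  have hν0 : 0 ≤ ν := by rw [hν]; linarith
  have hgap1 : lam j0 > 2 * δ := lt_of_le_of_lt (le_max_left _ _) hgap
  have hgap2 : lam j0 > lam j1 := lt_of_le_of_lt (le_max_right _ _) hgap
  have hgap0 : 0 < lam j0 - lam j1 := by linarith
  -- the projection A of M onto W
  set A : Matrix (Fin d) (Fin d) ℝ := PW M with hA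
  have hAmem : A ∈ Submodule.span ℝ (Set.range fun j => vecMulVec (w j) (w j)) := hPW.1 M
  have hAfix : PW A = A := hPW.2.1 A hAmem
  have hMfix : PWh M = M := hPWh.2.1 M hM
  have hEnorm : frobNorm (M - A) ≤ δ := by
    have h1 : (PW - PWh) M = A - M := by
      simp only [LinearMap.sub_apply, hMfix, hA]
    have h2 : frobNorm ((PW - PWh) M) ≤ hsNorm (PW - PWh) * frobNorm M :=
      frobNorm_linmap_le _ _
    rw [h1, hMS, mul_one] at h2
    have h3 : frobNorm (M - A) = frobNorm (A - M) := by
      rw [frobNorm, frobNorm, show M - A = -(A - M) by rw [neg_sub], frobInner_neg_neg]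
    rw [h3, hδ]
    exact h2
  -- Pythagoras / contraction
  have hMM : frobInner M M = 1 := by rw [← frobNorm_sq, hMS]; norm_num
  have hAE0 : frobInner A (M - A) = 0 := by
    have h1 : frobInner (PW M) (M - PW M) = frobInner M (PW (M - PW M)) := hPW.2.2 M (M - PW M)
    have h2 : PW (M - PW M) = 0 := by
      rw [map_sub, hAfix]
      exact sub_self _
    rw [← hA] at h1 h2
    rw [h1, h2]
    simp [frobInner]
  have hsplit : frobInner M M = frobInner A A + 2 * frobInner A (M - A) + frobInner (M - A) (M - A) := by
    conv_lhs => rw [show M = A + (M - A) by abel]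
    exact frobInner_add_add _ _
  have hAA1 : frobInner A A ≤ 1 := by
    have := frobInner_self_nonneg (M - A)
    rw [hAE0] at hsplit
    linarith [hMM ▸ hsplit]
  -- decompose A in terms of the frame
  obtain ⟨σ, hσA⟩ : ∃ σ : Fin m → ℝ, ∑ j, σ j • vecMulVec (w j) (w j) = A := by
    exact (Finsupp.mem_span_range_iff_exists_finsupp.mp hAmem).elim
      (fun c hc => ⟨c, by rwa [Finsupp.sum_fintype] at hc; intro j; exact zero_smul _ _⟩)
  have hS2 : ∑ j, σ j ^ 2 ≤ cr⁻¹ := by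
    have h1 := hriesz σ
    rw [hσA, frobNorm_sq] at h1
    rw [← one_div, le_div_iff₀ hcr, mul_comm]
    linarith
  -- quadratic form of A
  have hquad : ∀ x : Fin d → ℝ, dotProduct x (A.mulVec x) = ∑ j, σ j * (dotProduct x (w j))^2 := by
    intro x
    rw [← hσA, sum_mulVec', dotProduct_sum']
    refine Finset.sum_congr rfl fun j _ => ?_
    rw [Matrix.smul_mulVec, vecMulVec_mulVec', dotProduct_smul, dotProduct_smul,
      dotProduct_comm x (w j), smul_eq_mul, smul_eq_mul, sq]
  -- nearness of quadratic forms
  have hqf : ∀ v : Fin d → ℝ, (∑ i, v i ^ 2) = 1 →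
      |dotProduct v (M.mulVec v) - ∑ j, σ j * (dotProduct v (w j))^2| ≤ δ := by
    intro v hv
    have h1 : dotProduct v ((M - A).mulVec v)
        = dotProduct v (M.mulVec v) - ∑ j, σ j * (dotProduct v (w j))^2 := by
      rw [Matrix.sub_mulVec, dotProduct_sub, hquad]
    calc |dotProduct v (M.mulVec v) - ∑ j, σ j * (dotProduct v (w j))^2|
        = |dotProduct v ((M - A).mulVec v)| := by rw [h1]
      _ ≤ frobNorm (M - A) := quadform_abs_le _ v hv
      _ ≤ δ := hEnorm
  -- Rayleigh quotients of eigenvectors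
  have hRay : ∀ i, dotProduct (u i) (M.mulVec (u i)) = lam i := by
    intro i
    rw [heig i, dotProduct_smul, smul_eq_mul, horth i i, if_pos rfl, mul_one]
  -- the maximal coefficient
  obtain ⟨js, -, hjs'⟩ := Finset.exists_max_image (Finset.univ : Finset (Fin m)) σ
    ⟨⟨0, hm⟩, Finset.mem_univ _⟩
  have hjs : ∀ j, σ j ≤ σ js := fun j => hjs' j (Finset.mem_univ j)
  have hu1q := hqf (u j0) (hu_unit j0)
  rw [hRay j0] at hu1q
  have ha0 : 0 ≤ σ js := by
    by_contra hneg
    push_neg at hneg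
    have hsum_neg : ∑ j, σ j * (dotProduct (u j0) (w j))^2 ≤ 0 := by
      apply Finset.sum_nonpos
      intro j _
      have : σ j < 0 := lt_of_le_of_lt (hjs j) hneg
      nlinarith [sq_nonneg (dotProduct (u j0) (w j))]
    have := abs_le.mp hu1q
    linarith
  have hT : ∑ j, (dotProduct (u j0) (w j))^2 ≤ CF := by
    have := hframe (u j0)
    rwa [hu_unit j0, mul_one] at this
  have hlam_upper : lam j0 ≤ σ js * CF + δ := by
    have h1 : ∑ j, σ j * (dotProduct (u j0) (w j))^2 ≤ σ js * CF := by
      calc ∑ j, σ j * (dotProduct (u j0) (w j))^2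
          ≤ ∑ j, σ js * (dotProduct (u j0) (w j))^2 :=
            Finset.sum_le_sum fun j _ => mul_le_mul_of_nonneg_right (hjs j) (sq_nonneg _)
        _ = σ js * ∑ j, (dotProduct (u j0) (w j))^2 := by rw [Finset.mul_sum]
        _ ≤ σ js * CF := mul_le_mul_of_nonneg_left hT ha0
    have := abs_le.mp hu1q
    linarith
  have ha_le : σ js ≤ (Real.sqrt cr)⁻¹ := by
    have h1 : σ js ^ 2 ≤ cr⁻¹ :=
      le_trans (Finset.single_le_sum (fun j (_ : j ∈ Finset.univ) => sq_nonneg (σ j))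
        (Finset.mem_univ js)) hS2
    calc σ js ≤ |σ js| := le_abs_self _
      _ = Real.sqrt (σ js ^ 2) := (Real.sqrt_sq_eq_abs _).symm
      _ ≤ Real.sqrt cr⁻¹ := Real.sqrt_le_sqrt h1
      _ = (Real.sqrt cr)⁻¹ := Real.sqrt_inv cr
  set t : ℝ := (Real.sqrt cr)⁻¹ * Real.sqrt ν with ht
  have ht0 : 0 ≤ t := by positivity
  have hνsqrt : Real.sqrt ν ≤ 1/2 := aux_sqrt_le_of_sq_le (by norm_num) (by norm_num; linarith)
  have hνeq : Real.sqrt ν * Real.sqrt ν = ν := Real.mul_self_sqrt hν0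
  have haν : σ js * ν ≤ t / 2 := by
    have hsc : 0 ≤ (Real.sqrt cr)⁻¹ := by positivity
    nlinarith
  have ha_low : lam j0 - δ - t/2 ≤ σ js := by
    have : σ js * CF = σ js + σ js * ν := by rw [hν]; ring
    nlinarith
  -- Parseval identities
  have hUU : ∀ k l : Fin d, ∑ i, u i k * u i l = if k = l then 1 else 0 := by
    have hU1 : (Matrix.of u) * (Matrix.of u)ᵀ = 1 := by
      ext i j
      rw [Matrix.mul_apply, Matrix.one_apply]
      simpa [Matrix.transpose_apply, Matrix.of_apply, dotProduct] using horth i j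
    have hU2 : (Matrix.of u)ᵀ * (Matrix.of u) = 1 := mul_eq_one_comm.mp hU1
    intro k l
    have h := congrFun (congrFun hU2 k) l
    rw [Matrix.mul_apply, Matrix.one_apply] at h
    simpa [Matrix.transpose_apply, Matrix.of_apply] using h
  have hParseval : ∀ x : Fin d → ℝ, ∑ i, (dotProduct (u i) x)^2 = ∑ k, x k ^ 2 := by
    intro x
    have step1 : ∀ i, (dotProduct (u i) x)^2 = ∑ k, ∑ l, (x k * x l) * (u i k * u i l) := by
      intro i
      rw [sq, dotProduct, Finset.sum_mul_sum]
      exact Finset.sum_congr rfl fun k _ => Finset.sum_congr rfl fun l _ => by ring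
    calc ∑ i, (dotProduct (u i) x)^2
        = ∑ i, ∑ k, ∑ l, (x k * x l) * (u i k * u i l) :=
          Finset.sum_congr rfl fun i _ => step1 i
      _ = ∑ k, ∑ l, ∑ i, (x k * x l) * (u i k * u i l) := by
          rw [Finset.sum_comm]
          exact Finset.sum_congr rfl fun k _ => Finset.sum_comm
      _ = ∑ k, ∑ l, (x k * x l) * ∑ i, u i k * u i l :=
          Finset.sum_congr rfl fun k _ => Finset.sum_congr rfl fun l _ =>
            (Finset.mul_sum _ _ _).symm
      _ = ∑ k, x k ^ 2 := by
          refine Finset.sum_congr rfl fun k _ => ?_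
          simp only [hUU, mul_ite, mul_one, mul_zero]
          rw [Finset.sum_ite_eq]
          simp [sq]
  set c : Fin d → ℝ := fun i => dotProduct (u i) (w js) with hc
  have hsum_c : ∑ i, c i ^ 2 = 1 := by rw [hc]; simp only; rw [hParseval (w js), hw_unit js]
  -- the residual vector
  set r : Fin d → ℝ := M.mulVec (w js) - σ js • (w js) with hr
  have hMsymm : Mᵀ = M := hWhsym M hM
  have hrI : ∀ i, dotProduct (u i) r = (lam i - σ js) * c i := by
    intro i
    have h1 : dotProduct (u i) (M.mulVec (w js)) = lam i * c i := by
      rw [Matrix.dotProduct_mulVec]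
      have : (u i) ᵥ* M = lam i • u i := by
        conv_lhs => rw [← hMsymm]
        rw [Matrix.vecMul_transpose, heig i]
      rw [this, smul_dotProduct, smul_eq_mul]
    rw [hr, dotProduct_sub, h1, dotProduct_smul, smul_eq_mul]
    ring
  have hrnorm : ∑ k, r k ^ 2 = ∑ i, ((lam i - σ js) * c i)^2 := by
    rw [← hParseval r]
    exact Finset.sum_congr rfl fun i _ => by rw [hrI i]
  -- bound on the residual
  have hsynth : ∀ τ : Fin m → ℝ, (∑ k, (∑ j, τ j * w j k)^2) ≤ CF * ∑ j, τ j ^ 2 := by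
    intro τ
    set y : Fin d → ℝ := fun k => ∑ j, τ j * w j k with hy
    set Sy : ℝ := ∑ k, y k ^ 2 with hSy
    have hSy0 : 0 ≤ Sy := by positivity
    have h1 : Sy = ∑ j, τ j * dotProduct y (w j) := by
      rw [hSy]
      calc ∑ k, y k ^ 2 = ∑ k, y k * ∑ j, τ j * w j k :=
            Finset.sum_congr rfl fun k _ => by rw [sq, hy]
        _ = ∑ k, ∑ j, τ j * (w j k * y k) := by
            refine Finset.sum_congr rfl fun k _ => ?_
            rw [Finset.mul_sum]
            exact Finset.sum_congr rfl fun j _ => by ring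
        _ = ∑ j, ∑ k, τ j * (w j k * y k) := Finset.sum_comm
        _ = ∑ j, τ j * dotProduct y (w j) := by
            refine Finset.sum_congr rfl fun j _ => ?_
            rw [dotProduct, Finset.mul_sum]
            exact Finset.sum_congr rfl fun k _ => by ring
    have h2 : Sy^2 ≤ (∑ j, τ j ^2) * ∑ j, (dotProduct y (w j))^2 := by
      rw [h1]; exact aux_cs _ _
    have h3 : ∑ j, (dotProduct y (w j))^2 ≤ CF * Sy := hframe y
    have h4 : Sy^2 ≤ (∑ j, τ j^2) * (CF * Sy) := by
      calc Sy^2 ≤ (∑ j, τ j ^2) * ∑ j, (dotProduct y (w j))^2 := h2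
        _ ≤ (∑ j, τ j^2) * (CF * Sy) := by
            apply mul_le_mul_of_nonneg_left h3 (by positivity)
    rcases eq_or_lt_of_le hSy0 with h | h
    · rw [← h]; positivity
    · nlinarith [h4, h]
  -- bound on ∑ τ², where τ j = if j = js then 0 else σ j ⟨w j, w js⟩
  have herase : ∑ j ∈ Finset.univ.erase js, (dotProduct (w js) (w j))^2 ≤ ν := by
    have h1 := hframe (w js)
    rw [hw_unit js, mul_one] at h1
    have h2 : (dotProduct (w js) (w js))^2 + ∑ j ∈ Finset.univ.erase js, (dotProduct (w js) (w j))^2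
        = ∑ j, (dotProduct (w js) (w j))^2 :=
      Finset.add_sum_erase _ (fun j => (dotProduct (w js) (w j))^2) (Finset.mem_univ js)
    rw [hww js, one_pow] at h2
    rw [hν]
    linarith
  have hν_each : ∀ j, j ≠ js → (dotProduct (w j) (w js))^2 ≤ ν := by
    intro j hj
    rw [dotProduct_comm]
    refine le_trans (Finset.single_le_sum (f := fun j => (dotProduct (w js) (w j))^2)
      (fun j _ => sq_nonneg _) ?_) herase
    exact Finset.mem_erase.mpr ⟨hj, Finset.mem_univ j⟩
  set τ : Fin m → ℝ := fun j => if j = js then 0 else σ j * dotProduct (w j) (w js) with hτ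
  have hτ2 : ∑ j, τ j ^ 2 ≤ ν * cr⁻¹ := by
    have h1 : ∀ j, τ j ^ 2 ≤ σ j ^ 2 * ν := by
      intro j
      simp only [hτ]
      by_cases hj : j = js
      · simp only [if_pos hj]
        rw [zero_pow (by norm_num)]
        exact mul_nonneg (sq_nonneg _) hν0
      · simp only [if_neg hj, mul_pow]
        exact mul_le_mul_of_nonneg_left (hν_each j hj) (sq_nonneg _)
    calc ∑ j, τ j ^ 2 ≤ ∑ j, σ j ^ 2 * ν := Finset.sum_le_sum fun j _ => h1 j
      _ = (∑ j, σ j ^ 2) * ν := by rw [Finset.sum_mul]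
      _ ≤ cr⁻¹ * ν := mul_le_mul_of_nonneg_right hS2 hν0
      _ = ν * cr⁻¹ := mul_comm _ _
  -- the deviation of A.mulVec (w js) from σ js • w js
  have hAws : A.mulVec (w js) = ∑ j, (σ j * dotProduct (w j) (w js)) • w j := by
    rw [← hσA, sum_mulVec']
    refine Finset.sum_congr rfl fun j _ => ?_
    rw [Matrix.smul_mulVec, vecMulVec_mulVec', smul_smul]
  have he_eq : ∀ k, A.mulVec (w js) k - σ js * w js k = ∑ j, τ j * w j k := by
    intro k
    have h1 : A.mulVec (w js) k = ∑ j, (σ j * dotProduct (w j) (w js)) * w j k := by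
      rw [hAws, Finset.sum_apply]
      exact Finset.sum_congr rfl fun j _ => by rw [Pi.smul_apply, smul_eq_mul]
    have h2 : ∀ j, (σ j * dotProduct (w j) (w js)) * w j k
        = τ j * w j k + (if j = js then σ js * w js k else 0) := by
      intro j
      simp only [hτ]
      by_cases hj : j = js
      · rw [hj, if_pos rfl, if_pos rfl, hww js]
        ring
      · rw [if_neg hj, if_neg hj]
        ring
    rw [h1, Finset.sum_congr rfl (fun j _ => h2 j), Finset.sum_add_distrib,
      Finset.sum_ite_eq' Finset.univ js (fun _ => σ js * w js k),
      if_pos (Finset.mem_univ js)]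
    ring
  have ht2 : t ^ 2 = ν * cr⁻¹ := by
    rw [ht, mul_pow, inv_pow, Real.sq_sqrt hcr.le, Real.sq_sqrt hν0, mul_comm]
  have hCF0 : (0:ℝ) ≤ CF := by linarith
  have he_norm : Real.sqrt (∑ k, (A.mulVec (w js) k - σ js * w js k)^2)
      ≤ Real.sqrt CF * t := by
    apply aux_sqrt_le_of_sq_le (by positivity)
    have hs : ∑ k, (A.mulVec (w js) k - σ js * w js k)^2 = ∑ k, (∑ j, τ j * w j k)^2 :=
      Finset.sum_congr rfl fun k _ => by rw [he_eq k]
    calc ∑ k, (A.mulVec (w js) k - σ js * w js k)^2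
        = ∑ k, (∑ j, τ j * w j k)^2 := hs
      _ ≤ CF * ∑ j, τ j ^ 2 := hsynth τ
      _ ≤ CF * (ν * cr⁻¹) := mul_le_mul_of_nonneg_left hτ2 hCF0
      _ = (Real.sqrt CF * t)^2 := by
          rw [mul_pow, Real.sq_sqrt hCF0, ht2]
  -- bound on the residual r
  have hr_split : ∀ k, r k = (M - A).mulVec (w js) k + (A.mulVec (w js) k - σ js * w js k) := by
    intro k
    rw [hr]
    simp only [Matrix.sub_mulVec, Pi.sub_apply, Pi.smul_apply, smul_eq_mul]
    ring
  have hr_norm : vnorm r ≤ δ + Real.sqrt CF * t := by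
    rw [vnorm]
    calc Real.sqrt (∑ k, r k ^ 2)
        = Real.sqrt (∑ k, ((M - A).mulVec (w js) k + (A.mulVec (w js) k - σ js * w js k))^2) := by
          congr 1
          exact Finset.sum_congr rfl fun k _ => by rw [hr_split k]
      _ ≤ Real.sqrt (∑ k, ((M - A).mulVec (w js) k)^2)
          + Real.sqrt (∑ k, (A.mulVec (w js) k - σ js * w js k)^2) := aux_tri _ _
      _ ≤ δ + Real.sqrt CF * t := by
          apply add_le_add _ he_norm
          have h1 : vnorm ((M - A).mulVec (w js)) ≤ frobNorm (M - A) * vnorm (w js) :=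
            mulVec_vnorm_le _ _
          rw [hw js, mul_one] at h1
          exact le_trans h1 hEnorm
  have hCFs : Real.sqrt CF ≤ 9/8 := by
    apply aux_sqrt_le_of_sq_le (by norm_num)
    rw [hν] at hν4
    norm_num
    linarith
  have hr_norm' : vnorm r ≤ δ + (9/8) * t := by
    refine le_trans hr_norm ?_
    have := mul_le_mul_of_nonneg_right hCFs ht0
    linarith
  -- eigen-expansion bounds
  have hc1sq : c j0 ^ 2 ≤ 1 := by
    rw [← hsum_c]
    exact Finset.single_le_sum (f := fun i => c i ^ 2) (fun i _ => sq_nonneg _) (Finset.mem_univ j0)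
  have habs1 : |c j0| ≤ 1 := by
    rw [← Real.sqrt_sq_eq_abs]
    exact aux_sqrt_le_of_sq_le zero_le_one (by rwa [one_pow])
  have hsum_split : c j0 ^ 2 + ∑ i ∈ Finset.univ.erase j0, c i ^ 2 = 1 := by
    rw [← hsum_c]
    exact Finset.add_sum_erase _ (fun i => c i ^ 2) (Finset.mem_univ j0)
  -- choose the sign
  set s : ℝ := if 0 ≤ c j0 then 1 else -1 with hs
  have hs_or : s = 1 ∨ s = -1 := by
    rw [hs]
    by_cases h : 0 ≤ c j0
    · left; rw [if_pos h]
    · right; rw [if_neg h]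
  have hs_mul : s * c j0 = |c j0| := by
    rw [hs]
    by_cases h : 0 ≤ c j0
    · rw [if_pos h, one_mul, abs_of_nonneg h]
    · push_neg at h
      rw [if_neg (not_le.mpr h), abs_of_neg h]
      ring
  have hs_sq : s ^ 2 = 1 := by
    rcases hs_or with h | h <;> rw [h] <;> norm_num
  have hvn_eq : vnorm (s • w js - u j0) = Real.sqrt (2 - 2 * |c j0|) := by
    rw [vnorm]
    congr 1
    have hexp : ∑ k, (s * w js k - u j0 k)^2
        = s^2 * (∑ k, w js k ^ 2) - 2*s*(∑ k, w js k * u j0 k) + ∑ k, u j0 k ^ 2 := by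
      rw [Finset.mul_sum, Finset.mul_sum, ← Finset.sum_sub_distrib, ← Finset.sum_add_distrib]
      exact Finset.sum_congr rfl fun k _ => by ring
    have hdw : ∑ k, w js k * u j0 k = c j0 := by
      rw [hc]
      simp only
      rw [dotProduct_comm]
      rfl
    calc ∑ k, (s • w js - u j0) k ^ 2 = ∑ k, (s * w js k - u j0 k)^2 := by
          exact Finset.sum_congr rfl fun k _ => by
            rw [Pi.sub_apply, Pi.smul_apply, smul_eq_mul]
      _ = s^2 * (∑ k, w js k ^ 2) - 2*s*(∑ k, w js k * u j0 k) + ∑ k, u j0 k ^ 2 := hexp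
      _ = 2 - 2 * |c j0| := by
          rw [hw_unit js, hu_unit j0, hdw, hs_sq, mul_assoc, hs_mul]
          ring
  refine ⟨js, s, hs_or, ?_⟩
  rw [hvn_eq]
  set G : ℝ := lam j0 - lam j1 with hG
  set B : ℝ := t + ν + 2 * δ with hB
  have hB0 : 0 ≤ B := by rw [hB]; linarith
  have hgoal : Real.sqrt (2 - 2 * |c j0|) ≤ Real.sqrt 8 * B / G := by
    apply aux_sqrt_le_of_sq_le (by positivity)
    have hy2 : (Real.sqrt 8 * B / G)^2 = 8 * B^2 / G^2 := by
      rw [div_pow, mul_pow, Real.sq_sqrt (by norm_num : (0:ℝ) ≤ 8)]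
    rw [hy2, le_div_iff₀ (by positivity : (0:ℝ) < G^2)]
    apply endgame_arith hgap0 hB0 habs1
    rcases le_or_gt G (2 * B) with hcase | hcase
    · exact Or.inl hcase
    · -- Davis–Kahan style bound
      refine Or.inr ?_
      have hlow : ∀ i : Fin d, i ≠ j0 → 3/4 * G ≤ σ js - lam i := by
        intro i hi
        have hi1 : j1 ≤ i := by
          rw [Fin.le_def]
          have : (i : ℕ) ≠ 0 := fun h => hi (Fin.ext h)
          simp only [hj1]
          omega
        have hlami : lam i ≤ lam j1 := hmono j1 i hi1
        have hδt : δ + t/2 ≤ B/2 := by rw [hB]; linarith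
        rw [hG] at hcase ⊢
        linarith
      have hkey : (3/4 * G)^2 * ∑ i ∈ Finset.univ.erase j0, c i ^ 2 ≤ (δ + 9/8 * t)^2 := by
        calc (3/4 * G)^2 * ∑ i ∈ Finset.univ.erase j0, c i ^ 2
            = ∑ i ∈ Finset.univ.erase j0, (3/4 * G)^2 * c i ^ 2 := Finset.mul_sum _ _ _
          _ ≤ ∑ i ∈ Finset.univ.erase j0, (lam i - σ js)^2 * c i ^ 2 := by
              refine Finset.sum_le_sum fun i hi => ?_
              have hi' : i ≠ j0 := (Finset.mem_erase.mp hi).1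
              have h1 := hlow i hi'
              have h2 : (3/4 * G)^2 ≤ (lam i - σ js)^2 := by
                rw [show (lam i - σ js)^2 = (σ js - lam i)^2 by ring]
                apply pow_le_pow_left₀ (by positivity) h1
              exact mul_le_mul_of_nonneg_right h2 (sq_nonneg _)
          _ ≤ ∑ i, (lam i - σ js)^2 * c i ^ 2 := by
              apply Finset.sum_le_sum_of_subset_of_nonneg (Finset.erase_subset _ _)
              intro i _ _
              positivity
          _ = ∑ k, r k ^ 2 := by
              rw [hrnorm]
              exact Finset.sum_congr rfl fun i _ => by ring
          _ ≤ (δ + 9/8 * t)^2 := by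
              have h1 : ∑ k, r k ^ 2 = vnorm r ^ 2 := by
                rw [vnorm, Real.sq_sqrt (by positivity)]
              rw [h1]
              apply pow_le_pow_left₀ _ hr_norm'
              rw [vnorm]
              exact Real.sqrt_nonneg _
      have hBle : δ + 9/8 * t ≤ 3/2 * B := by rw [hB]; linarith
      calc (3/4 * G)^2 * (1 - c j0 ^ 2)
          = (3/4 * G)^2 * ∑ i ∈ Finset.univ.erase j0, c i ^ 2 := by
            rw [show (1 : ℝ) - c j0 ^2 = ∑ i ∈ Finset.univ.erase j0, c i ^ 2 by linarith]
        _ ≤ (δ + 9/8 * t)^2 := hkey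
        _ ≤ (3/2 * B)^2 := pow_le_pow_left₀ (by positivity) hBle 2
  exact hgoal
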